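/- Let C_n : C(q) → V_1^{⊗2n} be a U_q(sl_2)-intertwiner whose image lies in the invariant submodule. Then for k ≤ n, (E^(k) ⊗ 1) ∘ C_n = (-1)^k q^{-k(k-1)} (1 ⊗ K^k E^(k)) ∘ C_n. -/
import Mathlib


noncomputable section

open Finset

/-- The base field ℂ(q). -/
abbrev Fq : Type := RatFunc ℂ

/-- The variable q. -/
def q : Fq := RatFunc.X

/-- Quantum integer [k] = ∑_{j=0}^{k-1} q^{k-2j-1}. -/
def qint (k : ℕ) : Fq := ∑ j ∈ Finset.range k, q ^ ((k : ℤ) - 2 * j - 1)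

/-- Quantum factorial [k]!. -/
def qfact (k : ℕ) : Fq := ∏ j ∈ Finset.range k, qint (j + 1)

/-- Quantum binomial coefficient. -/
def qbinom (n k : ℕ) : Fq := qfact n / (qfact k * qfact (n - k))

/-- The n-th tensor power V₁^{⊗n} of the 2-dimensional simple module, modelled
as coefficient functions on the standard basis {v_a : a ∈ {0,1}^n}. -/
abbrev V (n : ℕ) : Type := (Fin n → Fin 2) → Fq

/-- weight contribution of a single tensor factor -/
def wtc (a : Fin 2) : ℤ := 2 * (a : ℤ) - 1

/-- total weight of a basis vector -/
def wt {n : ℕ} (b : Fin n → Fin 2) : ℤ := ∑ i, wtc (b i)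

/-- Action of E on V₁^{⊗n} via iterated comultiplication Δ(E)=1⊗E+E⊗K⁻¹. -/
def Eop {n : ℕ} (x : V n) : V n := fun b =>
  ∑ i : Fin n, if b i = 1 then
    q ^ (-(∑ j ∈ Finset.univ.filter (fun j => i < j), wtc (b j))) *
      x (Function.update b i 0)
  else 0

/-- Action of F on V₁^{⊗n} via iterated comultiplication Δ(F)=K⊗F+F⊗1. -/
def Fop {n : ℕ} (x : V n) : V n := fun b =>
  ∑ i : Fin n, if b i = 0 then
    q ^ (∑ j ∈ Finset.univ.filter (fun j => j < i), wtc (b j)) *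
      x (Function.update b i 1)
  else 0

/-- Action of K on V₁^{⊗n}. -/
def Kop {n : ℕ} (x : V n) : V n := fun b => q ^ (wt b) * x b

/-- Action of K⁻¹ on V₁^{⊗n}. -/
def Kinv {n : ℕ} (x : V n) : V n := fun b => q ^ (-(wt b)) * x b

/-- Divided power E^{(k)} = E^k/[k]!. -/
def Ediv {n : ℕ} (k : ℕ) (x : V n) : V n := fun b => (qfact k)⁻¹ * (Eop^[k] x) b

/-- Divided power F^{(k)} = F^k/[k]!. -/
def Fdiv {n : ℕ} (k : ℕ) (x : V n) : V n := fun b => (qfact k)⁻¹ * (Fop^[k] x) b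

/-- Projection 1_λ onto the q^λ-eigenspace of K. -/
def proj {n : ℕ} (lam : ℤ) (x : V n) : V n := fun b => if wt b = lam then x b else 0

/-- The operator p_{k,n} = E^{(k)}F^{(k)} / [n choose k]. -/
def pkn {n : ℕ} (k : ℕ) (x : V n) : V n := fun b => (qbinom n k)⁻¹ * Ediv k (Fdiv k x) b

/-- The Jones-Wenzl projector p_n = ∑_k p_{k,n} 1_{-n+2k}. -/
def JW {n : ℕ} (x : V n) : V n :=
  ∑ k ∈ Finset.range (n + 1), pkn k (proj (-(n : ℤ) + 2 * k) x)


/-- V₁^{⊗(n+m)} viewed as V₁^{⊗n} ⊗ V₁^{⊗m}. -/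
abbrev W (n m : ℕ) : Type := (Fin n → Fin 2) → (Fin m → Fin 2) → Fq

/-- An operator acting on the first n tensor factors. -/
def opL {n m : ℕ} (f : V n → V n) (x : W n m) : W n m := fun b c => f (fun b' => x b' c) b

/-- An operator acting on the last m tensor factors. -/
def opR {n m : ℕ} (f : V m → V m) (x : W n m) : W n m := fun b c => f (x b) c

/-- Total action of E on V₁^{⊗n} ⊗ V₁^{⊗m} via Δ(E) = 1⊗E + E⊗K⁻¹. -/
def Etot {n m : ℕ} (x : W n m) : W n m := opR Eop x + opL Eop (opR Kinv x)

/-- Total action of F via Δ(F) = K⊗F + F⊗1. -/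
def Ftot {n m : ℕ} (x : W n m) : W n m := opL Kop (opR Fop x) + opL Fop x

/-- Total action of K via Δ(K) = K⊗K. -/
def Ktot {n m : ℕ} (x : W n m) : W n m := opL Kop (opR Kop x)

set_option synthInstance.maxHeartbeats 1000000
set_option maxHeartbeats 1000000

lemma q_ne_zero : q ≠ 0 := RatFunc.X_ne_zero

lemma Eop_lin {n : ℕ} : IsLinearMap Fq (Eop (n := n)) := by
  constructor
  · intro x y
    funext b
    simp only [Eop, Pi.add_apply]
    rw [← Finset.sum_add_distrib]
    refine Finset.sum_congr rfl fun i _ => ?_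
    split <;> ring
  · intro a x
    funext b
    simp only [Eop, Pi.smul_apply, smul_eq_mul, Finset.mul_sum]
    refine Finset.sum_congr rfl fun i _ => ?_
    split <;> ring

lemma Kop_lin {n : ℕ} : IsLinearMap Fq (Kop (n := n)) := by
  constructor
  · intro x y; funext b; simp [Kop, mul_add]
  · intro a x; funext b; simp [Kop]; ring

lemma Kinv_lin {n : ℕ} : IsLinearMap Fq (Kinv (n := n)) := by
  constructor
  · intro x y; funext b; simp [Kinv, mul_add]
  · intro a x; funext b; simp [Kinv]; ring

lemma iter_lin {n : ℕ} {f : V n → V n} (hf : IsLinearMap Fq f) (k : ℕ) :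
    IsLinearMap Fq (f^[k]) := by
  induction k with
  | zero => exact ⟨fun x y => rfl, fun a x => rfl⟩
  | succ k ih =>
    constructor
    · intro x y
      simp only [Function.iterate_succ_apply', ih.map_add, hf.map_add]
    · intro a x
      simp only [Function.iterate_succ_apply', ih.map_smul, hf.map_smul]

lemma lin_mul {n : ℕ} {f : V n → V n} (hf : IsLinearMap Fq f) (a : Fq) (x : V n) :
    f (fun b => a * x b) = fun b => a * f x b := by
  have e1 : (fun b => a * x b) = a • x := by funext b; simp
  have e2 : (fun b => a * f x b) = a • f x := by funext b; simp
  rw [e1, e2, hf.map_smul]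

lemma wt_update {n : ℕ} (b : Fin n → Fin 2) (i : Fin n) (v : Fin 2) :
    wt (Function.update b i v) = wt b - wtc (b i) + wtc v := by
  unfold wt
  have h : ∀ j, wtc (Function.update b i v j) =
      Function.update (fun j => wtc (b j)) i (wtc v) j := by
    intro j
    by_cases hj : j = i
    · subst hj; simp
    · simp [Function.update_of_ne hj]
  rw [Finset.sum_congr rfl fun j _ => h j,
    Finset.sum_update_of_mem (Finset.mem_univ i)]
  have h2 : ∑ j : Fin n, wtc (b j)
      = ∑ j ∈ Finset.univ \ {i}, wtc (b j) + wtc (b i) :=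
    Finset.sum_eq_sum_sdiff_singleton_add (Finset.mem_univ i) _
  rw [h2]; ring

lemma Eop_Kop {n : ℕ} (x : V n) (b : Fin n → Fin 2) :
    Eop (Kop x) b = q ^ (-2 : ℤ) * Kop (Eop x) b := by
  simp only [Eop, Kop, Finset.mul_sum]
  refine Finset.sum_congr rfl fun i _ => ?_
  by_cases h : b i = 1
  · simp only [h, if_true]
    have hw : wt (Function.update b i 0) = wt b + (-2) := by
      rw [wt_update, h]
      have h1 : wtc 1 = 1 := by decide
      have h0 : wtc 0 = -1 := by decide
      rw [h1, h0]; ring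
    rw [hw, zpow_add₀ q_ne_zero]
    ring
  · simp [h]

lemma Eopk_Kop {n : ℕ} (k : ℕ) (x : V n) :
    Eop^[k] (Kop x) = fun b => q ^ (-2 * (k : ℤ)) * Kop (Eop^[k] x) b := by
  induction k generalizing x with
  | zero => funext b; simp
  | succ k ih =>
    funext b
    rw [Function.iterate_succ_apply]
    have h1 : Eop (Kop x) = fun b => q ^ (-2 : ℤ) * Kop (Eop x) b :=
      funext (Eop_Kop x)
    rw [h1, lin_mul (iter_lin Eop_lin k), ih (Eop x)]
    simp only []
    rw [← Function.iterate_succ_apply Eop k x, ← mul_assoc, ← zpow_add₀ q_ne_zero]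
    congr 2
    push_cast
    ring

lemma Kopk {n : ℕ} (k : ℕ) (x : V n) (b : Fin n → Fin 2) :
    Kop^[k] x b = q ^ ((k : ℤ) * wt b) * x b := by
  induction k generalizing x with
  | zero => simp
  | succ k ih =>
    rw [Function.iterate_succ_apply']
    show q ^ (wt b) * (Kop^[k] x b) = _
    rw [ih, ← mul_assoc, ← zpow_add₀ q_ne_zero]
    congr 2
    push_cast
    ring

lemma opL_opL {n m : ℕ} (f g : V n → V n) (x : W n m) :
    opL f (opL g x) = opL (f ∘ g) x := rfl

lemma opL_Eop_smulW {n m : ℕ} (s : Fq) (w : W n m) :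
    opL Eop (fun b b' => s * w b b') = fun b b' => s * opL Eop w b b' := by
  funext b b'
  show Eop (fun b'' => s * w b'' b') b = s * Eop (fun b'' => w b'' b') b
  simp only [Eop, Finset.mul_sum]
  refine Finset.sum_congr rfl fun i _ => ?_
  split <;> ring

lemma opL_Eop_opR {n m : ℕ} {g : V m → V m} (hg : IsLinearMap Fq g) (x : W n m) :
    opL Eop (opR g x) = opR g (opL Eop x) := by
  funext b c
  have key : opL Eop x b = ∑ i : Fin n,
      (if b i = 1 then q ^ (-(∑ j ∈ Finset.univ.filter (fun j => i < j), wtc (b j))) else 0) •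
        x (Function.update b i 0) := by
    funext c'
    simp only [opL, Eop, Finset.sum_apply, Pi.smul_apply, smul_eq_mul, ite_mul, zero_mul]
  have hG : g (opL Eop x b) = ∑ i : Fin n,
      (if b i = 1 then q ^ (-(∑ j ∈ Finset.univ.filter (fun j => i < j), wtc (b j))) else 0) •
        g (x (Function.update b i 0)) := by
    rw [key, show g = ⇑(IsLinearMap.mk' g hg) from rfl, map_sum]
    simp only [map_smul, IsLinearMap.mk'_apply]
  show Eop (fun b' => g (x b') c) b = g (opL Eop x b) c
  rw [hG]
  simp only [Eop, Finset.sum_apply, Pi.smul_apply, smul_eq_mul, ite_mul, zero_mul]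

lemma base_slide {n : ℕ} (c : W n n) (hE : Etot c = 0) :
    opL Eop c = fun b b' => -(Kop (Eop (c b)) b') := by
  have h := opL_Eop_opR (n := n) (Kinv_lin (n := n)) c
  funext b b'
  have he : opR Eop c b b' + opL Eop (opR Kinv c) b b' = 0 := by
    have := congrFun (congrFun hE b) b'
    simpa [Etot, Pi.add_apply] using this
  rw [h] at he
  simp only [opR, Kinv] at he
  -- he : Eop (c b) b' + q ^ (-(wt b')) * opL Eop c b b' = 0
  have hq : q ^ (wt b') * q ^ (-(wt b')) = 1 := by
    rw [← zpow_add₀ q_ne_zero]; simp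
  show opL Eop c b b' = -(Kop (Eop (c b)) b')
  simp only [Kop]
  have h2 : opL Eop c b b' = q ^ (wt b') * (q ^ (-(wt b')) * opL Eop c b b') := by
    rw [← mul_assoc, hq, one_mul]
  rw [h2]
  have h3 : q ^ (-(wt b')) * opL Eop c b b' = -(Eop (c b) b') := by
    linear_combination he
  rw [h3]
  ring

lemma main_slide {n : ℕ} (c : W n n) (hE : Etot c = 0) (k : ℕ) :
    opL (Eop^[k]) c = fun b b' =>
      (-1 : Fq) ^ k * q ^ (-((k * (k - 1) : ℕ) : ℤ)) * Kop^[k] (Eop^[k] (c b)) b' := by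
  induction k with
  | zero => funext b b'; simp [opL]
  | succ k ih =>
    have Ek_lin := iter_lin (Eop_lin (n := n)) k
    have Kk_lin := iter_lin (Kop_lin (n := n)) k
    have Glin : IsLinearMap Fq (fun y : V n => Kop^[k] (Eop^[k] y)) := by
      constructor
      · intro x y; simp only [Ek_lin.map_add, Kk_lin.map_add]
      · intro a x; simp only [Ek_lin.map_smul, Kk_lin.map_smul]
    have h1 : opL (Eop^[k + 1]) c = opL Eop (opL (Eop^[k]) c) := by
      rw [opL_opL, ← Function.iterate_succ' Eop k]
    have h2 : opL (Eop^[k]) c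
        = fun b b' => ((-1 : Fq) ^ k * q ^ (-((k * (k - 1) : ℕ) : ℤ)))
            * opR (fun y => Kop^[k] (Eop^[k] y)) c b b' := by
      rw [ih]; rfl
    rw [h1, h2, opL_Eop_smulW, opL_Eop_opR Glin, base_slide c hE]
    funext b b'
    show ((-1 : Fq) ^ k * q ^ (-((k * (k - 1) : ℕ) : ℤ)))
        * Kop^[k] (Eop^[k] ((fun b b' => -(Kop (Eop (c b)) b')) b)) b' = _
    have hneg : (fun b' => -(Kop (Eop (c b)) b')) = -(Kop (Eop (c b))) := rfl
    simp only [hneg]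
    rw [Ek_lin.map_neg, Kk_lin.map_neg]
    have hek : Eop^[k] (Kop (Eop (c b)))
        = fun b2 => q ^ (-2 * (k : ℤ)) * Kop (Eop^[k] (Eop (c b))) b2 := Eopk_Kop k _
    rw [hek, lin_mul Kk_lin]
    have hKE : Kop^[k] (Kop (Eop^[k] (Eop (c b)))) = Kop^[k + 1] (Eop^[k + 1] (c b)) := by
      rw [← Function.iterate_succ_apply Kop k, ← Function.iterate_succ_apply Eop k]
    simp only [Pi.neg_apply]
    rw [hKE]
    have hexp : (-((k * (k - 1) : ℕ) : ℤ)) + (-2 * (k : ℤ))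
        = -(((k + 1) * (k + 1 - 1) : ℕ) : ℤ) := by
      have hnat : (k + 1) * (k + 1 - 1) = k * (k - 1) + 2 * k := by
        cases k with
        | zero => rfl
        | succ j => simp [Nat.succ_sub_one]; ring
      rw [hnat]
      push_cast
      ring
    rw [← hexp, zpow_add₀ q_ne_zero]
    ring

/-- Theorem (E-slide along nested cups): if c = C_n(1) is an invariant vector of
V₁^{⊗n} ⊗ V₁^{⊗n}, then (E^{(k)} ⊗ 1) c = (-1)^k q^{-k(k-1)} (1 ⊗ K^k E^{(k)}) c for k ≤ n. -/
theorem E_divided_power_slide (n k : ℕ) (hk : k ≤ n) (c : W n n)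
    (hE : Etot c = 0) (hF : Ftot c = 0) (hK : Ktot c = c) :
    opL (Ediv k) c =
      fun b b' => (-1 : Fq) ^ k * q ^ (-((k * (k - 1) : ℕ) : ℤ)) *
        opR (fun y => Kop^[k] (Ediv k y)) c b b' := by
  funext b b'
  have h := congrFun (congrFun (main_slide c hE k) b) b'
  show Ediv k (fun b'' => c b'' b') b = _
  simp only [opL] at h
  simp only [opR, Ediv]
  rw [h, Kopk, Kopk]
  simp only [Ediv]
  ring
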